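/- If g : ℝⁿ → ℝ^{n×n} is a Lipschitz continuous map into symmetric positive-definite matrices on the closed upper half space {x_n ≥ 0} satisfying g_{jn}(x',0) = δ_{jn} for all boundary points (x',0), then the reflected matrix field g̃ defined by g̃_{ij}(x',x_n) = g_{ij}(x',|x_n|) when (i≠n and j≠n) or i=j=n, and g̃_{ij}(x',x_n) = sgn(x_n)·g_{ij}(x',|x_n|) otherwise, is Lipschitz continuous on all of ℝⁿ. -/

import Mathlib

/-- `sgn z = +1` for `z ≥ 0` and `−1` for `z < 0`. -/
noncomputable def sgn (z : ℝ) : ℝ := if z < 0 then -1 else 1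

/-- If `g` is a Lipschitz map on the closed upper half space
`{x | 0 ≤ xₙ}` into symmetric positive-definite matrices with `g_{jn}(x',0) = δ_{jn}`
on the boundary, then the reflected matrix field `g̃` is Lipschitz on all of `ℝⁿ`.
(Lipschitz continuity is stated entrywise, which is equivalent to Lipschitz
continuity with respect to any fixed norm on matrices.) -/
theorem stmt0 (n : ℕ) (g : (Fin (n + 1) → ℝ) → Matrix (Fin (n + 1)) (Fin (n + 1)) ℝ)
    (K : NNReal)
    (hLip : ∀ i j, LipschitzOnWith K (fun x => g x i j)
      {x : Fin (n + 1) → ℝ | 0 ≤ x (Fin.last n)})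
    (hsymm : ∀ x : Fin (n + 1) → ℝ, 0 ≤ x (Fin.last n) → (g x).IsSymm)
    (hpos : ∀ x : Fin (n + 1) → ℝ, 0 ≤ x (Fin.last n) → (g x).PosDef)
    (hbdry : ∀ x : Fin (n + 1) → ℝ, x (Fin.last n) = 0 →
      ∀ j, g x j (Fin.last n) = if j = Fin.last n then 1 else 0) :
    ∃ K' : NNReal, ∀ i j, LipschitzWith K'
      (fun x : Fin (n + 1) → ℝ =>
        (if (i ≠ Fin.last n ∧ j ≠ Fin.last n) ∨ (i = Fin.last n ∧ j = Fin.last n)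
          then 1 else sgn (x (Fin.last n))) *
        g (Function.update x (Fin.last n) |x (Fin.last n)|) i j) := by

  classical
  refine ⟨K, fun i j => ?_⟩
  set L := Fin.last n with hLdef
  set R : (Fin (n + 1) → ℝ) → (Fin (n + 1) → ℝ) :=
    fun x => Function.update x L |x L| with hRdef
  have hRmem : ∀ x, R x ∈ {x : Fin (n + 1) → ℝ | 0 ≤ x L} := by
    intro x
    simp [hRdef, Function.update_self, abs_nonneg]
  have hRlip : ∀ x y, dist (R x) (R y) ≤ dist x y := by
    intro x y
    refine (dist_pi_le_iff dist_nonneg).2 fun k => ?_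
    by_cases hk : k = L
    · subst hk
      simp only [hRdef, Function.update_self, Real.dist_eq]
      calc |(|x L| - |y L|)| ≤ |x L - y L| := abs_abs_sub_abs_le_abs_sub _ _
        _ = dist (x L) (y L) := (Real.dist_eq _ _).symm
        _ ≤ dist x y := dist_le_pi_dist x y L
    · simp only [hRdef, Function.update_of_ne hk]
      exact dist_le_pi_dist x y k
  have hg := lipschitzOnWith_iff_dist_le_mul.1 (hLip i j)
  have hh : ∀ x y, dist (g (R x) i j) (g (R y) i j) ≤ K * dist x y := by
    intro x y
    calc dist (g (R x) i j) (g (R y) i j) ≤ K * dist (R x) (R y) :=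
          hg _ (hRmem x) _ (hRmem y)
      _ ≤ K * dist x y := by
          exact mul_le_mul_of_nonneg_left (hRlip x y) K.coe_nonneg
  by_cases hC : (i ≠ L ∧ j ≠ L) ∨ (i = L ∧ j = L)
  · refine lipschitzWith_iff_dist_le_mul.2 fun x y => ?_
    simp only [if_pos hC, one_mul]
    exact hh x y
  · -- boundary value is zero
    have hij : (i = L ∧ j ≠ L) ∨ (i ≠ L ∧ j = L) := by tauto
    have hzero : ∀ x : Fin (n + 1) → ℝ, x L = 0 → g x i j = 0 := by
      intro x hx
      rcases hij with ⟨hi, hj⟩ | ⟨hi, hj⟩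
      · have hs := hsymm x (le_of_eq hx.symm)
        have : g x j i = g x i j := Matrix.IsSymm.apply hs i j
        rw [← this, hi]
        have := hbdry x hx j
        rw [hLdef] at hj ⊢
        simpa [hj, hLdef] using this
      · rw [hj]
        have := hbdry x hx i
        rw [hLdef] at hi ⊢
        simpa [hi, hLdef] using this
    have hPmem : ∀ x : Fin (n + 1) → ℝ,
        Function.update x L 0 ∈ {x : Fin (n + 1) → ℝ | 0 ≤ x L} := by
      intro x; simp [Function.update_self]
    have hbd : ∀ x, |g (R x) i j| ≤ K * |x L| := by
      intro x
      have h0 : g (Function.update x L 0) i j = 0 :=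
        hzero _ (Function.update_self _ _ _)
      have hdist : dist (R x) (Function.update x L 0) ≤ |x L| := by
        refine (dist_pi_le_iff (abs_nonneg _)).2 fun k => ?_
        by_cases hk : k = L
        · subst hk
          simp [hRdef, Function.update_self, Real.dist_eq, abs_abs]
        · simp [hRdef, Function.update_of_ne hk]
      have := hg _ (hRmem x) _ (hPmem x)
      rw [Real.dist_eq, h0, sub_zero] at this
      calc |g (R x) i j| ≤ K * dist (R x) (Function.update x L 0) := this
        _ ≤ K * |x L| := mul_le_mul_of_nonneg_left hdist K.coe_nonneg
    refine lipschitzWith_iff_dist_le_mul.2 fun x y => ?_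
    simp only [if_neg hC]
    have hxyL : |x L - y L| ≤ dist x y := by
      rw [← Real.dist_eq]; exact dist_le_pi_dist x y L
    rcases lt_or_ge (x L) 0 with hx | hx <;> rcases lt_or_ge (y L) 0 with hy | hy
    · simp only [sgn, if_pos hx, if_pos hy, Real.dist_eq]
      rw [show (-1 : ℝ) * g (R x) i j - -1 * g (R y) i j
          = -(g (R x) i j - g (R y) i j) by ring, abs_neg, ← Real.dist_eq]
      exact hh x y
    · simp only [sgn, if_pos hx, if_neg (not_lt.2 hy), Real.dist_eq]
      calc |(-1 : ℝ) * g (R x) i j - 1 * g (R y) i j|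
          ≤ |g (R x) i j| + |g (R y) i j| := by
            rw [neg_one_mul, one_mul]
            calc |-g (R x) i j - g (R y) i j| ≤ |-g (R x) i j| + |g (R y) i j| :=
                  abs_sub _ _
              _ = _ := by rw [abs_neg]
        _ ≤ K * |x L| + K * |y L| := add_le_add (hbd x) (hbd y)
        _ = K * (|x L| + |y L|) := by ring
        _ = K * |x L - y L| := by
            rw [abs_of_neg hx, abs_of_nonneg hy, abs_of_neg (by linarith)]
            ring
        _ ≤ K * dist x y := mul_le_mul_of_nonneg_left hxyL K.coe_nonneg
    · simp only [sgn, if_neg (not_lt.2 hx), if_pos hy, Real.dist_eq]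
      calc |(1 : ℝ) * g (R x) i j - -1 * g (R y) i j|
          ≤ |g (R x) i j| + |g (R y) i j| := by
            rw [neg_one_mul, one_mul, sub_neg_eq_add]
            exact abs_add_le _ _
        _ ≤ K * |x L| + K * |y L| := add_le_add (hbd x) (hbd y)
        _ = K * (|x L| + |y L|) := by ring
        _ = K * |x L - y L| := by
            rw [abs_of_nonneg hx, abs_of_neg hy, abs_of_nonneg (by linarith)]
            ring
        _ ≤ K * dist x y := mul_le_mul_of_nonneg_left hxyL K.coe_nonneg
    · simp only [sgn, if_neg (not_lt.2 hx), if_neg (not_lt.2 hy), one_mul]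
      exact hh x y
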